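/- Let n be a positive integer with n dividing p − 1 and 6 dividing n, and set t = (p−1)/n and F = ZMod p. Let ι : F → O/𝔪 be the unique ring homomorphism of the prime field F into the residue field, and let ω : Fˣ → Kˣ be a group homomorphism such that for every x ∈ Fˣ the element ω(x) lies in O and its image in O/𝔪 equals ι(x) (the Teichmüller character). Let ψ : F → K be a nontrivial additive character. Then for every integer k with 1 ≤ k ≤ n/6 − 1, the product of Gauss sums g(ω^{−3kt}, ψ) · g(ω^{6kt}, ψ) · g(ω^{−2kt}, ψ) · g(ω^{−kt}, ψ) has absolute value 1/p; equivalently, the Jacobi sum J = p⁻¹ · g(ω^{−3kt}, ψ) · g(ω^{6kt}, ψ) · g(ω^{−2kt}, ψ) · g(ω^{−kt}, ψ) satisfies ‖J‖ = 1. -/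

import Mathlib

/-- A multiplicative nonarchimedean absolute value on the algebraic closure of `ℚ_[p]`
extending the standard `p`-adic absolute value. -/
structure PadicAbsVal (p : ℕ) [Fact p.Prime] where
  v : AlgebraicClosure ℚ_[p] → ℝ
  v_mul : ∀ x y, v (x * y) = v x * v y
  v_nonarch : ∀ x y, v (x + y) ≤ max (v x) (v y)
  v_ext : ∀ x : ℚ_[p], v (algebraMap ℚ_[p] (AlgebraicClosure ℚ_[p]) x) = ‖x‖

namespace PadicAbsVal

variable {p : ℕ} [Fact p.Prime] (A : PadicAbsVal p)

lemma v_zero : A.v 0 = 0 := by simpa using A.v_ext 0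

lemma v_one : A.v 1 = 1 := by simpa using A.v_ext 1

lemma v_nonneg (x : AlgebraicClosure ℚ_[p]) : 0 ≤ A.v x := by
  obtain ⟨y, hy⟩ := IsAlgClosed.exists_pow_nat_eq x (n := 2) two_pos
  have h : A.v x = A.v y * A.v y := by rw [← hy, pow_two, A.v_mul]
  rw [h]; exact mul_self_nonneg _

lemma v_neg (x : AlgebraicClosure ℚ_[p]) : A.v (-x) = A.v x := by
  have h1 : A.v (-1) = 1 := by simpa using A.v_ext (-1)
  rw [← neg_one_mul, A.v_mul, h1, one_mul]

/-- The valuation ring `O = {x : ‖x‖ ≤ 1}` of the absolute value. -/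
def O : Subring (AlgebraicClosure ℚ_[p]) where
  carrier := {x | A.v x ≤ 1}
  mul_mem' := fun {a b} ha hb => by
    simp only [Set.mem_setOf_eq] at *
    rw [A.v_mul]
    simpa using mul_le_mul ha hb (A.v_nonneg b) zero_le_one
  one_mem' := le_of_eq A.v_one
  add_mem' := fun {a b} ha hb => (A.v_nonarch a b).trans (max_le ha hb)
  zero_mem' := by simp only [Set.mem_setOf_eq, A.v_zero]; exact zero_le_one
  neg_mem' := fun {a} ha => by simpa only [Set.mem_setOf_eq, A.v_neg] using ha

/-- The maximal ideal `𝔪 = {x : ‖x‖ < 1}` of the valuation ring. -/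
def mIdeal : Ideal A.O where
  carrier := {x | A.v (x : AlgebraicClosure ℚ_[p]) < 1}
  add_mem' := fun {a b} ha hb => by
    simp only [Set.mem_setOf_eq] at *
    exact lt_of_le_of_lt (A.v_nonarch a b) (max_lt ha hb)
  zero_mem' := by
    simp only [Set.mem_setOf_eq]
    rw [show ((0 : A.O) : AlgebraicClosure ℚ_[p]) = 0 from rfl, A.v_zero]
    exact zero_lt_one
  smul_mem' := fun c x hx => by
    simp only [Set.mem_setOf_eq, smul_eq_mul] at *
    rw [show ((c * x : A.O) : AlgebraicClosure ℚ_[p]) = (c : AlgebraicClosure ℚ_[p]) * x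
      from rfl, A.v_mul]
    exact lt_of_le_of_lt (mul_le_of_le_one_left (A.v_nonneg _) c.2) hx

end PadicAbsVal

/-- The Gauss sum `g(ω^e, ψ) = −∑_{x ∈ 𝔽_pˣ} ω(x)^e·ψ(x)` attached to an integer power of
a multiplicative character `ω` of `𝔽_pˣ` and an additive character `ψ` of `𝔽_p`. -/
noncomputable def gaussSumPow (p : ℕ) [Fact p.Prime]
    (ω : (ZMod p)ˣ →* (AlgebraicClosure ℚ_[p])ˣ)
    (ψ : AddChar (ZMod p) (AlgebraicClosure ℚ_[p])) (e : ℤ) : AlgebraicClosure ℚ_[p] :=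
  -∑ x : (ZMod p)ˣ, ((ω x ^ e : (AlgebraicClosure ℚ_[p])ˣ) : AlgebraicClosure ℚ_[p]) *
    ψ (x : ZMod p)

section Aux

open Finset

variable {p : ℕ} [Fact p.Prime] (A : PadicAbsVal p)

local notation "K" => AlgebraicClosure ℚ_[p]

namespace PadicAbsVal

lemma v_pow (x : K) (m : ℕ) : A.v (x ^ m) = A.v x ^ m := by
  induction m with
  | zero => simpa using A.v_one
  | succ m ih => rw [pow_succ, pow_succ, A.v_mul, ih]

lemma mIdeal_ne_top : A.mIdeal ≠ ⊤ := by
  intro h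
  have h1 : (1 : A.O) ∈ A.mIdeal := h ▸ Submodule.mem_top
  have : A.v ((1 : A.O) : K) < 1 := h1
  rw [show ((1 : A.O) : K) = 1 from rfl, A.v_one] at this
  exact lt_irrefl _ this

lemma v_eq_one_of_residue_ne_zero {x : K} (hx : x ∈ A.O)
    (h : Ideal.Quotient.mk A.mIdeal ⟨x, hx⟩ ≠ 0) : A.v x = 1 := by
  refine le_antisymm hx ?_
  by_contra hlt
  push_neg at hlt
  exact h (Ideal.Quotient.eq_zero_iff_mem.mpr hlt)

end PadicAbsVal

variable (ι : ZMod p →+* A.O ⧸ A.mIdeal)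
    (ω : (ZMod p)ˣ →* (AlgebraicClosure ℚ_[p])ˣ)
    (hω : ∀ x : (ZMod p)ˣ,
      ∃ h : ((ω x : (AlgebraicClosure ℚ_[p])ˣ) : AlgebraicClosure ℚ_[p]) ∈ A.O,
      Ideal.Quotient.mk A.mIdeal ⟨((ω x : (AlgebraicClosure ℚ_[p])ˣ) :
        AlgebraicClosure ℚ_[p]), h⟩ = ι x)

section Chi

variable {A ι ω}

lemma iota_injective : Function.Injective ι := by
  haveI := Ideal.Quotient.nontrivial_iff.mpr A.mIdeal_ne_top
  exact ι.injective

include hω in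
lemma v_omega (u : (ZMod p)ˣ) : A.v ((ω u : (AlgebraicClosure ℚ_[p])ˣ) : K) = 1 := by
  obtain ⟨h, hres⟩ := hω u
  refine A.v_eq_one_of_residue_ne_zero h ?_
  rw [hres]
  intro h0
  exact Units.ne_zero u (iota_injective (ι := ι) (by rw [h0, map_zero]))

include hω in
lemma omega_injective : Function.Injective ω := by
  intro x y h
  obtain ⟨hx, hrx⟩ := hω x
  obtain ⟨hy, hry⟩ := hω y
  have hcoe : ((ω x : (AlgebraicClosure ℚ_[p])ˣ) : K) = ((ω y : (AlgebraicClosure ℚ_[p])ˣ) : K) :=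
    congrArg Units.val h
  have : ι (x : ZMod p) = ι (y : ZMod p) := by
    rw [← hrx, ← hry]
    exact congrArg _ (Subtype.ext hcoe)
  exact Units.ext (iota_injective (ι := ι) this)


lemma chi_pow_apply_unit (m : ℕ) (u : (ZMod p)ˣ) :
    ((MulChar.ofUnitHom ω) ^ m) (u : ZMod p) = ((ω u : (AlgebraicClosure ℚ_[p])ˣ) : K) ^ m := by
  rw [MulChar.pow_apply_coe, MulChar.ofUnitHom_coe]

include hω in
lemma chi_pow_mem (m : ℕ) (y : ZMod p) : ((MulChar.ofUnitHom ω) ^ m) y ∈ A.O := by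
  by_cases hy : IsUnit y
  · obtain ⟨u, rfl⟩ := hy
    obtain ⟨h, -⟩ := hω u
    rw [chi_pow_apply_unit]
    exact pow_mem h m
  · rw [MulChar.map_nonunit _ hy]
    exact zero_mem _

include hω in
lemma chi_pow_residue (m : ℕ) (hm : 0 < m) (y : ZMod p)
    (hmem : ((MulChar.ofUnitHom ω) ^ m) y ∈ A.O) :
    Ideal.Quotient.mk A.mIdeal ⟨((MulChar.ofUnitHom ω) ^ m) y, hmem⟩ = ι (y ^ m) := by
  by_cases hy : IsUnit y
  · obtain ⟨u, rfl⟩ := hy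
    obtain ⟨h, hres⟩ := hω u
    have he : (⟨((MulChar.ofUnitHom ω) ^ m) (u : ZMod p), hmem⟩ : A.O)
        = (⟨((ω u : (AlgebraicClosure ℚ_[p])ˣ) : K), h⟩ : A.O) ^ m := by
      refine Subtype.ext ?_
      rw [SubmonoidClass.coe_pow]
      exact chi_pow_apply_unit m u
    rw [he, map_pow, hres, ← map_pow]
  · have hy0 : ((MulChar.ofUnitHom ω) ^ m) y = 0 := MulChar.map_nonunit _ hy
    have hyz : y = 0 := by simpa [isUnit_iff_ne_zero] using hy
    rw [show (⟨((MulChar.ofUnitHom ω) ^ m) y, hmem⟩ : A.O) = 0 from Subtype.ext hy0, map_zero,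
      hyz, zero_pow hm.ne', map_zero]

lemma chi_pow_card_sub_one : (MulChar.ofUnitHom ω) ^ (p - 1) = 1 := by
  have := MulChar.pow_card_eq_one (MulChar.ofUnitHom ω)
  rwa [ZMod.card_units] at this

include hω in
lemma chi_pow_ne_one (m : ℕ) (hm0 : 0 < m) (hm : m < p - 1) :
    (MulChar.ofUnitHom ω) ^ m ≠ 1 := by
  obtain ⟨g, hg⟩ := IsCyclic.exists_generator (α := (ZMod p)ˣ)
  have hord : orderOf g = p - 1 := by
    rw [orderOf_eq_card_of_forall_mem_zpowers hg, Nat.card_eq_fintype_card, ZMod.card_units]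
  intro h1
  have h2 : ((MulChar.ofUnitHom ω) ^ m) (g : ZMod p) = 1 := by
    rw [h1, MulChar.one_apply_coe]
  rw [chi_pow_apply_unit] at h2
  have h3 : (ω g : (AlgebraicClosure ℚ_[p])ˣ) ^ m = 1 := by
    apply Units.ext
    rw [Units.val_pow_eq_pow_val]
    exact h2
  have h4 : orderOf ((ω g : (AlgebraicClosure ℚ_[p])ˣ)) = p - 1 := by
    rw [orderOf_injective ω (omega_injective hω) g, hord]
  have h5 : p - 1 ∣ m := h4 ▸ orderOf_dvd_of_pow_eq_one h3
  exact absurd (Nat.le_of_dvd hm0 h5) (by omega)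

lemma sum_units_eq (f : ZMod p → K) (hf : f 0 = 0) :
    ∑ x : ZMod p, f x = ∑ u : (ZMod p)ˣ, f (u : ZMod p) := by
  classical
  have h1 : ∑ u : (ZMod p)ˣ, f (u : ZMod p)
      = ∑ s : {a : ZMod p // a ≠ 0}, f (s : ZMod p) := by
    rw [← Equiv.sum_comp (unitsEquivNeZero) (fun s : {a : ZMod p // a ≠ 0} => f (s : ZMod p))]
    simp
  have h2 : ∑ s : {a : ZMod p // a ≠ 0}, f (s : ZMod p)
      = ∑ x ∈ Finset.univ.filter (· ≠ (0 : ZMod p)), f x :=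
    (Finset.sum_subtype _ (by simp) f).symm
  have h3 : ∑ x ∈ Finset.univ.filter (· ≠ (0 : ZMod p)), f x = ∑ x : ZMod p, f x :=
    Finset.sum_filter_of_ne (fun x _ hx h0 => hx (by rw [h0, hf]))
  rw [h1, h2, h3]

end Chi

end Aux
section Aux2

open Finset

variable {p : ℕ} [Fact p.Prime] (A : PadicAbsVal p)

local notation "K" => AlgebraicClosure ℚ_[p]

lemma zmod_sum_pow_eq_zero (e : ℕ) (he0 : 0 < e) (he1 : e < 2 * (p - 1)) (hne : e ≠ p - 1) :
    ∑ x : ZMod p, x ^ e = 0 := by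
  have hp : Fintype.card (ZMod p) = p := ZMod.card p
  by_cases h : e < p - 1
  · exact FiniteField.sum_pow_lt_card_sub_one (ZMod p) e (by rw [hp]; exact h)
  · push_neg at h
    have hf0 : 0 < e - (p - 1) := by omega
    have hf1 : e - (p - 1) < p - 1 := by omega
    have step : ∀ x : ZMod p, x ^ e = x ^ (e - (p - 1)) := by
      intro x
      by_cases hx : x = 0
      · rw [hx, zero_pow he0.ne', zero_pow hf0.ne']
      · have hxp : x ^ (p - 1) = 1 := ZMod.pow_card_sub_one_eq_one hx
        calc x ^ e = x ^ (e - (p - 1) + (p - 1)) := by congr 1; omega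
          _ = x ^ (e - (p - 1)) * x ^ (p - 1) := pow_add ..
          _ = x ^ (e - (p - 1)) := by rw [hxp, mul_one]
    rw [Finset.sum_congr rfl (fun x _ => step x)]
    exact FiniteField.sum_pow_lt_card_sub_one (ZMod p) _ (by rw [hp]; exact hf1)

lemma zmod_sum_pow_card_sub_one : ∑ x : ZMod p, x ^ (p - 1) = -1 := by
  have hp1 : 0 < p - 1 := by have := (Fact.out : p.Prime).two_le; omega
  rw [Finset.sum_eq_sum_sdiff_singleton_add (Finset.mem_univ (0 : ZMod p))]
  have hone : ∀ x ∈ Finset.univ \ {(0 : ZMod p)}, x ^ (p - 1) = 1 := fun x hx =>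
    ZMod.pow_card_sub_one_eq_one (by simpa using (Finset.mem_sdiff.mp hx).2)
  rw [Finset.sum_congr rfl hone, Finset.sum_const, zero_pow hp1.ne', add_zero,
    Finset.card_sdiff_of_subset (by simp), Finset.card_singleton, Finset.card_univ, ZMod.card]
  have hcast : ((p - 1 : ℕ) : ZMod p) = -1 := by
    rw [Nat.cast_sub (by omega), ZMod.natCast_self, Nat.cast_one, zero_sub]
  rw [nsmul_eq_mul, mul_one, hcast]

lemma zmod_char_sum_ne_zero (i j : ℕ) (hi : 0 < i) (hj : 0 < j) (hij : i + j < p - 1) :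
    (∑ x : ZMod p, x ^ (p - 1 - i) * (1 - x) ^ (p - 1 - j)) ≠ 0 := by
  have hm1 : 0 < p - 1 - i := by omega
  have hm2 : 0 < p - 1 - j := by omega
  set m1 := p - 1 - i with hm1d
  set m2 := p - 1 - j with hm2d
  have expand : ∀ x : ZMod p, x ^ m1 * (1 - x) ^ m2
      = ∑ kk ∈ Finset.range (m2 + 1), (-1) ^ kk * (m2.choose kk : ZMod p) * x ^ (m1 + kk) := by
    intro x
    have h1 : (1 - x) ^ m2
        = ∑ kk ∈ Finset.range (m2 + 1), (-x) ^ kk * 1 ^ (m2 - kk) * (m2.choose kk : ZMod p) := by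
      rw [show (1 - x : ZMod p) = -x + 1 by ring, add_pow]
    rw [h1, Finset.mul_sum]
    refine Finset.sum_congr rfl fun kk _ => ?_
    rw [one_pow, neg_pow, pow_add]
    ring
  have key : ∑ x : ZMod p, x ^ m1 * (1 - x) ^ m2
      = ∑ kk ∈ Finset.range (m2 + 1),
          (-1) ^ kk * (m2.choose kk : ZMod p) * ∑ x : ZMod p, x ^ (m1 + kk) := by
    rw [Finset.sum_congr rfl (fun x _ => expand x), Finset.sum_comm]
    exact Finset.sum_congr rfl fun kk _ => (Finset.mul_sum _ _ _).symm
  have hzero : ∀ kk ∈ Finset.range (m2 + 1), kk ≠ i →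
      (-1) ^ kk * (m2.choose kk : ZMod p) * ∑ x : ZMod p, x ^ (m1 + kk) = 0 := by
    intro kk hkk hne
    rw [Finset.mem_range] at hkk
    rw [zmod_sum_pow_eq_zero (m1 + kk) (by omega) (by omega) (by omega), mul_zero]
  rw [key, Finset.sum_eq_single i hzero
    (fun hi' => absurd (Finset.mem_range.mpr (by omega)) hi')]
  have hpm : m1 + i = p - 1 := by omega
  rw [hpm, zmod_sum_pow_card_sub_one]
  have hC : (m2.choose i : ZMod p) ≠ 0 := by
    intro hdvd
    rw [ZMod.natCast_eq_zero_iff] at hdvd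
    have hle : i ≤ m2 := by omega
    have heq := Nat.choose_mul_factorial_mul_factorial hle
    have hdvd2 : p ∣ m2.factorial := heq ▸ (hdvd.mul_right _).mul_right _
    have := (Nat.Prime.dvd_factorial (Fact.out)).mp hdvd2
    omega
  exact mul_ne_zero (mul_ne_zero (pow_ne_zero _ (neg_ne_zero.mpr one_ne_zero)) hC)
    (neg_ne_zero.mpr one_ne_zero)

end Aux2
section Aux3

open Finset

variable {p : ℕ} [Fact p.Prime] {A : PadicAbsVal p}

local notation "K" => AlgebraicClosure ℚ_[p]

variable {ι : ZMod p →+* A.O ⧸ A.mIdeal}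
    {ω : (ZMod p)ˣ →* (AlgebraicClosure ℚ_[p])ˣ}
    (hω : ∀ x : (ZMod p)ˣ,
      ∃ h : ((ω x : (AlgebraicClosure ℚ_[p])ˣ) : AlgebraicClosure ℚ_[p]) ∈ A.O,
      Ideal.Quotient.mk A.mIdeal ⟨((ω x : (AlgebraicClosure ℚ_[p])ˣ) :
        AlgebraicClosure ℚ_[p]), h⟩ = ι x)

include hω in
set_option synthInstance.maxHeartbeats 400000 in
lemma v_jacobiSum (i j : ℕ) (hi : 0 < i) (hj : 0 < j) (hij : i + j < p - 1) :
    A.v (jacobiSum ((MulChar.ofUnitHom ω) ^ (p - 1 - i)) ((MulChar.ofUnitHom ω) ^ (p - 1 - j)))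
      = 1 := by
  have hm1 : 0 < p - 1 - i := by omega
  have hm2 : 0 < p - 1 - j := by omega
  set m1 := p - 1 - i
  set m2 := p - 1 - j
  have memterm : ∀ x : ZMod p,
      ((MulChar.ofUnitHom ω) ^ m1) x * ((MulChar.ofUnitHom ω) ^ m2) (1 - x) ∈ A.O :=
    fun x => mul_mem (chi_pow_mem hω m1 x) (chi_pow_mem hω m2 (1 - x))
  set Jo : A.O := ∑ x : ZMod p, (⟨_, memterm x⟩ : A.O) with hJo
  have hcoe : (Jo : K)
      = jacobiSum ((MulChar.ofUnitHom ω) ^ m1) ((MulChar.ofUnitHom ω) ^ m2) := by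
    rw [hJo, jacobiSum]
    exact map_sum A.O.subtype _ _
  have hres : Ideal.Quotient.mk A.mIdeal Jo = ι (∑ x : ZMod p, x ^ m1 * (1 - x) ^ m2) := by
    rw [hJo, map_sum, map_sum]
    refine Finset.sum_congr rfl fun x _ => ?_
    have hsplit : (⟨_, memterm x⟩ : A.O)
        = ⟨_, chi_pow_mem hω m1 x⟩ * ⟨_, chi_pow_mem hω m2 (1 - x)⟩ := rfl
    rw [hsplit, map_mul, chi_pow_residue hω m1 hm1 x, chi_pow_residue hω m2 hm2 (1 - x),
      ← map_mul]
  rw [← hcoe]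
  refine A.v_eq_one_of_residue_ne_zero Jo.2 ?_
  rw [show (⟨(Jo : K), Jo.2⟩ : A.O) = Jo from rfl, hres]
  intro h0
  exact zmod_char_sum_ne_zero i j hi hj hij
    (iota_injective (ι := ι) (h0.trans (map_zero ι).symm))

variable (ψ : AddChar (ZMod p) (AlgebraicClosure ℚ_[p]))

lemma gaussSumPow_natCast (m : ℕ) :
    gaussSumPow p ω ψ (m : ℤ) = -gaussSum ((MulChar.ofUnitHom ω) ^ m) ψ := by
  rw [gaussSumPow, gaussSum]
  rw [sum_units_eq (fun x => ((MulChar.ofUnitHom ω) ^ m) x * ψ x)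
    (show ((MulChar.ofUnitHom ω) ^ m) 0 * ψ 0 = 0 by
      rw [MulChar.map_nonunit _ (by simp [isUnit_iff_ne_zero]), zero_mul])]
  congr 1
  refine Finset.sum_congr rfl fun u _ => ?_
  rw [chi_pow_apply_unit, zpow_natCast, Units.val_pow_eq_pow_val]

lemma gaussSumPow_neg (m : ℕ) (hm : m ≤ p - 1) :
    gaussSumPow p ω ψ (-(m : ℤ)) = -gaussSum ((MulChar.ofUnitHom ω) ^ (p - 1 - m)) ψ := by
  have key : ∀ u : (ZMod p)ˣ, (ω u) ^ (-(m : ℤ)) = (ω u) ^ (((p - 1 - m : ℕ)) : ℤ) := by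
    intro u
    have hu : u ^ (p - 1) = 1 := by
      rw [← ZMod.card_units p]
      exact pow_card_eq_one
    have h1 : (ω u) ^ (p - 1) = 1 := by rw [← map_pow, hu, map_one]
    rw [zpow_neg, zpow_natCast, zpow_natCast]
    refine inv_eq_of_mul_eq_one_left ?_
    rw [← pow_add, show p - 1 - m + m = p - 1 by omega, h1]
  have : gaussSumPow p ω ψ (-(m : ℤ)) = gaussSumPow p ω ψ (((p - 1 - m : ℕ)) : ℤ) := by
    rw [gaussSumPow, gaussSumPow]
    congr 1
    exact Finset.sum_congr rfl fun u _ => by rw [key u]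
  rw [this, gaussSumPow_natCast]

end Aux3
/-- If `6 ∣ n`, `n ∣ p − 1`, `t = (p−1)/n`, `ω` is the Teichmüller character of `𝔽_pˣ` and
`ψ` a nontrivial additive character of `𝔽_p`, then for `1 ≤ k ≤ n/6 − 1` the product of
Gauss sums `g(ω^{−3kt})·g(ω^{6kt})·g(ω^{−2kt})·g(ω^{−kt})` has absolute value `1/p`;
equivalently, the corresponding Jacobi sum `J` satisfies `‖J‖ = 1`. -/
theorem jacobi_sum_of_ulmer_curve_is_unit
    (p : ℕ) [Fact p.Prime] (n : ℕ) (hn : 0 < n) (hn6 : 6 ∣ n) (hnp : n ∣ p - 1)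
    (t : ℕ) (ht : n * t = p - 1) (A : PadicAbsVal p)
    (ι : ZMod p →+* A.O ⧸ A.mIdeal)
    (ω : (ZMod p)ˣ →* (AlgebraicClosure ℚ_[p])ˣ)
    (hω : ∀ x : (ZMod p)ˣ,
      ∃ h : ((ω x : (AlgebraicClosure ℚ_[p])ˣ) : AlgebraicClosure ℚ_[p]) ∈ A.O,
      Ideal.Quotient.mk A.mIdeal ⟨((ω x : (AlgebraicClosure ℚ_[p])ˣ) :
        AlgebraicClosure ℚ_[p]), h⟩ = ι x)
    (ψ : AddChar (ZMod p) (AlgebraicClosure ℚ_[p])) (hψ : ∃ a, ψ a ≠ 1)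
    (k : ℕ) (hk1 : 1 ≤ k) (hk2 : k ≤ n / 6 - 1) :
    A.v (gaussSumPow p ω ψ (-((3 * k * t : ℕ) : ℤ)) *
        gaussSumPow p ω ψ ((6 * k * t : ℕ) : ℤ) *
        gaussSumPow p ω ψ (-((2 * k * t : ℕ) : ℤ)) *
        gaussSumPow p ω ψ (-((k * t : ℕ) : ℤ))) = 1 / (p : ℝ) ∧
    A.v (((p : AlgebraicClosure ℚ_[p]))⁻¹ *
        (gaussSumPow p ω ψ (-((3 * k * t : ℕ) : ℤ)) *
          gaussSumPow p ω ψ ((6 * k * t : ℕ) : ℤ) *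
          gaussSumPow p ω ψ (-((2 * k * t : ℕ) : ℤ)) *
          gaussSumPow p ω ψ (-((k * t : ℕ) : ℤ)))) = 1 := by
  have hp2 : 2 ≤ p := (Fact.out : p.Prime).two_le
  have htpos : 0 < t := by
    rcases Nat.eq_zero_or_pos t with h | h
    · rw [h, mul_zero] at ht; omega
    · exact h
  have hk6 : 6 * (k + 1) ≤ n := by omega
  have h6a' : 6 * (k * t) + 6 * t ≤ p - 1 := by
    calc 6 * (k * t) + 6 * t = (6 * (k + 1)) * t := by ring
      _ ≤ n * t := Nat.mul_le_mul_right t hk6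
      _ = p - 1 := ht
  rw [show 3 * k * t = 3 * (k * t) from mul_assoc 3 k t,
    show 6 * k * t = 6 * (k * t) from mul_assoc 6 k t,
    show 2 * k * t = 2 * (k * t) from mul_assoc 2 k t]
  set a := k * t with hadef
  have ha0 : 0 < a := Nat.mul_pos hk1 htpos
  have h6lt : 6 * a < p - 1 := by omega
  clear_value a
  clear hadef hk1 hk2 ht hnp hn6 hn hk6 h6a' htpos
  -- abbreviations
  set χ : MulChar (ZMod p) (AlgebraicClosure ℚ_[p]) := MulChar.ofUnitHom ω with hχdef
  -- conversion of the four Gauss sums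
  have g1 := gaussSumPow_neg (ω := ω) ψ (3 * a) (by omega)
  have g2 := gaussSumPow_natCast (ω := ω) ψ (6 * a)
  have g3 := gaussSumPow_neg (ω := ω) ψ (2 * a) (by omega)
  have g4 := gaussSumPow_neg (ω := ω) ψ a (by omega)
  rw [g1, g2, g3, g4, ← hχdef]
  -- nontrivial characters
  have hne3 : χ ^ (3 * a) ≠ 1 := by
    rw [hχdef]; exact chi_pow_ne_one hω (3 * a) (by omega) (by omega)
  have hneP3 : χ ^ (p - 1 - 3 * a) ≠ 1 := by
    rw [hχdef]; exact chi_pow_ne_one hω (p - 1 - 3 * a) (by omega) (by omega)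
  have hcard1 : χ ^ (p - 1) = 1 := by rw [hχdef]; exact chi_pow_card_sub_one
  -- Jacobi sum decompositions
  have χprod1 : χ ^ (p - 1 - 3 * a) * χ ^ (6 * a) = χ ^ (3 * a) := by
    rw [← pow_add, show p - 1 - 3 * a + 6 * a = (p - 1) + 3 * a by omega, pow_add,
      hcard1, one_mul]
  have χprod2 : χ ^ (p - 1 - 2 * a) * χ ^ (p - 1 - a) = χ ^ (p - 1 - 3 * a) := by
    rw [← pow_add, show p - 1 - 2 * a + (p - 1 - a) = (p - 1) + (p - 1 - 3 * a) by omega,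
      pow_add, hcard1, one_mul]
  have e1 : gaussSum (χ ^ (3 * a)) ψ * jacobiSum (χ ^ (p - 1 - 3 * a)) (χ ^ (6 * a))
      = gaussSum (χ ^ (p - 1 - 3 * a)) ψ * gaussSum (χ ^ (6 * a)) ψ := by
    have := jacobiSum_mul_nontrivial (χ := χ ^ (p - 1 - 3 * a)) (φ := χ ^ (6 * a))
      (by rw [χprod1]; exact hne3) ψ
    rwa [χprod1] at this
  have e2 : gaussSum (χ ^ (p - 1 - 3 * a)) ψ
        * jacobiSum (χ ^ (p - 1 - 2 * a)) (χ ^ (p - 1 - a))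
      = gaussSum (χ ^ (p - 1 - 2 * a)) ψ * gaussSum (χ ^ (p - 1 - a)) ψ := by
    have := jacobiSum_mul_nontrivial (χ := χ ^ (p - 1 - 2 * a)) (φ := χ ^ (p - 1 - a))
      (by rw [χprod2]; exact hneP3) ψ
    rwa [χprod2] at this
  -- pairing of the two remaining Gauss sums
  have hprim : ψ.IsPrimitive := by
    refine AddChar.IsPrimitive.of_ne_one ?_
    obtain ⟨a0, ha0'⟩ := hψ
    intro h
    exact ha0' (by rw [h]; rfl)
  have hinv : (χ ^ (3 * a))⁻¹ = χ ^ (p - 1 - 3 * a) := by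
    refine inv_eq_of_mul_eq_one_right ?_
    rw [← pow_add, show 3 * a + (p - 1 - 3 * a) = p - 1 by omega, hcard1]
  have e3 : gaussSum (χ ^ (3 * a)) ψ * gaussSum (χ ^ (p - 1 - 3 * a)) ψ
      = (χ ^ (p - 1 - 3 * a)) (-1) * (p : AlgebraicClosure ℚ_[p]) := by
    have hcard := gaussSum_mul_gaussSum_eq_card hne3 hprim
    rw [hinv] at hcard
    have hmulinv := mul_gaussSum_inv_eq_gaussSum (χ ^ (p - 1 - 3 * a)) ψ
    calc gaussSum (χ ^ (3 * a)) ψ * gaussSum (χ ^ (p - 1 - 3 * a)) ψ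
        = gaussSum (χ ^ (3 * a)) ψ
          * ((χ ^ (p - 1 - 3 * a)) (-1) * gaussSum (χ ^ (p - 1 - 3 * a)) ψ⁻¹) := by
          rw [hmulinv]
      _ = (χ ^ (p - 1 - 3 * a)) (-1)
          * (gaussSum (χ ^ (3 * a)) ψ * gaussSum (χ ^ (p - 1 - 3 * a)) ψ⁻¹) := by ring
      _ = (χ ^ (p - 1 - 3 * a)) (-1) * (p : AlgebraicClosure ℚ_[p]) := by
          rw [hcard, ZMod.card]
  -- absolute values of the pieces
  have vJ1 : A.v (jacobiSum (χ ^ (p - 1 - 3 * a)) (χ ^ (6 * a))) = 1 := by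
    have := v_jacobiSum hω (3 * a) (p - 1 - 6 * a) (by omega) (by omega) (by omega)
    rwa [show p - 1 - (p - 1 - 6 * a) = 6 * a by omega, ← hχdef] at this
  have vJ2 : A.v (jacobiSum (χ ^ (p - 1 - 2 * a)) (χ ^ (p - 1 - a))) = 1 := by
    have := v_jacobiSum hω (2 * a) a (by omega) (by omega) (by omega)
    rwa [← hχdef] at this
  have vε : A.v ((χ ^ (p - 1 - 3 * a)) (-1)) = 1 := by
    rw [show (-1 : ZMod p) = ((-1 : (ZMod p)ˣ) : ZMod p) from (Units.coe_neg_one).symm,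
      hχdef, chi_pow_apply_unit, A.v_pow, v_omega hω, one_pow]
  have vp : A.v ((p : AlgebraicClosure ℚ_[p])) = 1 / (p : ℝ) := by
    rw [show ((p : ℕ) : AlgebraicClosure ℚ_[p])
        = algebraMap ℚ_[p] (AlgebraicClosure ℚ_[p]) ((p : ℕ) : ℚ_[p]) from
      (map_natCast (algebraMap ℚ_[p] (AlgebraicClosure ℚ_[p])) p).symm,
      A.v_ext, Padic.norm_p, one_div]
  -- the product identity
  have hP : -gaussSum (χ ^ (p - 1 - 3 * a)) ψ * -gaussSum (χ ^ (6 * a)) ψ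
        * -gaussSum (χ ^ (p - 1 - 2 * a)) ψ * -gaussSum (χ ^ (p - 1 - a)) ψ
      = jacobiSum (χ ^ (p - 1 - 3 * a)) (χ ^ (6 * a))
        * jacobiSum (χ ^ (p - 1 - 2 * a)) (χ ^ (p - 1 - a))
        * ((χ ^ (p - 1 - 3 * a)) (-1) * (p : AlgebraicClosure ℚ_[p])) := by
    calc -gaussSum (χ ^ (p - 1 - 3 * a)) ψ * -gaussSum (χ ^ (6 * a)) ψ
        * -gaussSum (χ ^ (p - 1 - 2 * a)) ψ * -gaussSum (χ ^ (p - 1 - a)) ψ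
        = (gaussSum (χ ^ (p - 1 - 3 * a)) ψ * gaussSum (χ ^ (6 * a)) ψ)
          * (gaussSum (χ ^ (p - 1 - 2 * a)) ψ * gaussSum (χ ^ (p - 1 - a)) ψ) := by ring
      _ = (gaussSum (χ ^ (3 * a)) ψ * jacobiSum (χ ^ (p - 1 - 3 * a)) (χ ^ (6 * a)))
          * (gaussSum (χ ^ (p - 1 - 3 * a)) ψ
            * jacobiSum (χ ^ (p - 1 - 2 * a)) (χ ^ (p - 1 - a))) := by rw [e1, e2]
      _ = (gaussSum (χ ^ (3 * a)) ψ * gaussSum (χ ^ (p - 1 - 3 * a)) ψ)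
          * (jacobiSum (χ ^ (p - 1 - 3 * a)) (χ ^ (6 * a))
            * jacobiSum (χ ^ (p - 1 - 2 * a)) (χ ^ (p - 1 - a))) := by ring
      _ = _ := by rw [e3]; ring
  rw [hP]
  have hv1 : A.v (jacobiSum (χ ^ (p - 1 - 3 * a)) (χ ^ (6 * a))
        * jacobiSum (χ ^ (p - 1 - 2 * a)) (χ ^ (p - 1 - a))
        * ((χ ^ (p - 1 - 3 * a)) (-1) * (p : AlgebraicClosure ℚ_[p])))
      = 1 / (p : ℝ) := by
    rw [A.v_mul, A.v_mul, A.v_mul, vJ1, vJ2, vε, vp]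
    ring
  refine ⟨hv1, ?_⟩
  have hpne : ((p : ℕ) : AlgebraicClosure ℚ_[p]) ≠ 0 :=
    Nat.cast_ne_zero.mpr (by omega)
  have hinvp : A.v ((p : AlgebraicClosure ℚ_[p])⁻¹) * A.v ((p : AlgebraicClosure ℚ_[p])) = 1 := by
    rw [← A.v_mul, inv_mul_cancel₀ hpne, A.v_one]
  rw [A.v_mul, hv1]
  rw [vp] at hinvp
  exact hinvp
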